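/- Let ω ≥ 1, κ > 0, let k ≥ 1 and n_1,…,n_k be positive integers with n = n_1+⋯+n_k, and let ρ_B(s) = s^{−1} e^{−ω s} I_0(s). Then ∫_0^∞ (u^{n−1}/Γ(n)) exp( κ ∫_0^∞ (e^{−u s} − 1) ρ_B(s) ds ) ∏_{j=1}^k κ ∫_0^∞ s^{n_j} e^{−u s} ρ_B(s) ds du = κ^k ∫_0^∞ (u^{n−1}/Γ(n)) ( (ω + √(ω^2 − 1)) / (ω + u + √((ω+u)^2 − 1)) )^κ (u+ω)^{−n} ∏_{j=1}^k Γ(n_j) · ₂F₁( n_j/2, (n_j+1)/2; 1; 1/(u+ω)^2 ) du. -/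

import Mathlib

open MeasureTheory Set
open scoped ENNReal NNReal

/-- The modified Bessel function of the first kind of order 0,
`I₀(s) = Σ_{m=0}^∞ (s/2)^{2m} / (m!)²`. -/
noncomputable def besselI0 (s : ℝ) : ℝ :=
  ∑' m : ℕ, (s / 2) ^ (2 * m) / ((Nat.factorial m : ℝ)) ^ 2

/-- The Pochhammer symbol `(x)_m = Γ(x + m) / Γ(x)`. -/
noncomputable def poch (x : ℝ) (m : ℕ) : ℝ := Real.Gamma (x + m) / Real.Gamma x

/-- The Gauss hypergeometric series `₂F₁(a, b; 1; z) = Σ_m (a)_m (b)_m / ((1)_m m!) z^m`. -/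
noncomputable def hyp2F1one (a b z : ℝ) : ℝ :=
  ∑' m : ℕ, (poch a m * poch b m / (poch 1 m * (Nat.factorial m : ℝ))) * z ^ m

noncomputable def cb (m : ℕ) : ℝ := (Nat.centralBinom m : ℝ) / 4 ^ m

lemma cb_zero : cb 0 = 1 := by simp [cb, Nat.centralBinom_zero]

lemma cb_pos (m : ℕ) : 0 < cb m :=
  div_pos (by exact_mod_cast m.centralBinom_pos) (by positivity)

lemma centralBinom_le_four_pow (m : ℕ) : Nat.centralBinom m ≤ 4 ^ m := by
  have h : Nat.centralBinom m ≤ ∑ i ∈ Finset.range (2 * m + 1), Nat.choose (2 * m) i := by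
    exact Finset.single_le_sum (f := fun i => Nat.choose (2 * m) i) (fun i _ => Nat.zero_le _)
      (Finset.mem_range.2 (by omega))
  rw [Nat.sum_range_choose] at h
  calc Nat.centralBinom m ≤ 2 ^ (2 * m) := h
    _ = 4 ^ m := by rw [pow_mul]; norm_num

lemma cb_le_one (m : ℕ) : cb m ≤ 1 := by
  rw [cb, div_le_one (by positivity)]
  exact_mod_cast (by exact_mod_cast centralBinom_le_four_pow m : (Nat.centralBinom m : ℝ) ≤ (4:ℝ) ^ m)

lemma cb_succ (m : ℕ) : (2 * (m : ℝ) + 2) * cb (m + 1) = (2 * m + 1) * cb m := by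
  have h := Nat.succ_mul_centralBinom_succ m
  have h' : ((m : ℝ) + 1) * (Nat.centralBinom (m + 1) : ℝ)
      = 2 * (2 * m + 1) * (Nat.centralBinom m : ℝ) := by exact_mod_cast congrArg Nat.cast h
  have h4 : (4 : ℝ) ^ (m + 1) = 4 * 4 ^ m := by ring
  rw [cb, cb, h4]
  field_simp
  linear_combination 2 * h'

lemma summable_cb_mul_pow {z : ℝ} (hz : |z| < 1) : Summable (fun m : ℕ => cb m * z ^ m) := by
  apply Summable.of_norm
  apply Summable.of_nonneg_of_le (fun m => norm_nonneg _) (fun m => ?_)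
    (summable_geometric_of_lt_one (abs_nonneg z) hz)
  rw [norm_mul, norm_pow, Real.norm_eq_abs, Real.norm_eq_abs, abs_of_pos (cb_pos m)]
  calc cb m * |z| ^ m ≤ 1 * |z| ^ m := mul_le_mul_of_nonneg_right (cb_le_one m) (by positivity)
    _ = |z| ^ m := one_mul _

lemma summable_nat_mul_pow {r : ℝ} (h0 : 0 ≤ r) (hr : r < 1) :
    Summable (fun m : ℕ => (m : ℝ) * r ^ (m - 1)) := by
  rw [← summable_nat_add_iff 1]
  have h := (summable_pow_mul_geometric_of_norm_lt_one 1 (r := r)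
      (by rwa [Real.norm_eq_abs, abs_of_nonneg h0])).add
    (summable_geometric_of_lt_one h0 hr)
  apply h.congr
  intro m
  push_cast [Nat.add_sub_cancel]
  ring

lemma hasDerivAt_cbsum {z : ℝ} (hz : |z| < 1) :
    HasDerivAt (fun y : ℝ => ∑' m : ℕ, cb m * y ^ m)
      (∑' m : ℕ, cb m * ((m : ℝ) * z ^ (m - 1))) z := by
  set r : ℝ := (1 + |z|) / 2 with hr
  have hr0 : 0 ≤ r := by positivity
  have hr1 : r < 1 := by rw [hr]; linarith
  have hzr : |z| < r := by rw [hr]; linarith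
  apply hasDerivAt_tsum_of_isPreconnected (u := fun m : ℕ => (m : ℝ) * r ^ (m - 1))
    (summable_nat_mul_pow hr0 hr1) (isOpen_Ioo (a := -r) (b := r))
    (convex_Ioo _ _).isPreconnected
    (g' := fun m y => cb m * ((m : ℝ) * y ^ (m - 1)))
    (fun m y _ => (hasDerivAt_pow m y).const_mul (cb m))
    (fun m y hy => ?_) (y₀ := 0)
    (by rw [Set.mem_Ioo]; constructor <;> nlinarith [abs_nonneg z])
    (summable_cb_mul_pow (by simp))
    (by rw [Set.mem_Ioo]; exact abs_lt.1 hzr)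
  · rw [Real.norm_eq_abs, abs_mul, abs_of_pos (cb_pos m), abs_mul, Nat.abs_cast, abs_pow]
    have : |y| ≤ r := by
      rcases hy with ⟨h1, h2⟩; rw [abs_le]; exact ⟨le_of_lt h1, le_of_lt h2⟩
    calc cb m * ((m:ℝ) * |y| ^ (m-1)) ≤ 1 * ((m:ℝ) * r ^ (m-1)) := by
          apply mul_le_mul (cb_le_one m) _ (by positivity) zero_le_one
          exact mul_le_mul_of_nonneg_left (pow_le_pow_left₀ (abs_nonneg y) this _) (Nat.cast_nonneg m)
      _ = (m:ℝ) * r ^ (m-1) := one_mul _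

lemma cbsum_sq {z : ℝ} (h0 : 0 ≤ z) (h1 : z < 1) :
    (∑' m : ℕ, cb m * z ^ m) ^ 2 * (1 - z) = 1 := by
  set f : ℝ → ℝ := fun y => ∑' m : ℕ, cb m * y ^ m with hf
  set h : ℝ → ℝ := fun y => (f y) ^ 2 * (1 - y) with hh
  have key : ∀ y ∈ Set.uIcc (0:ℝ) z, HasDerivAt h 0 y := by
    intro y hy
    rw [Set.uIcc_of_le h0] at hy
    have hy1 : |y| < 1 := by
      rw [abs_lt]; exact ⟨by linarith [hy.1], lt_of_le_of_lt hy.2 h1⟩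
    set D : ℝ := ∑' m : ℕ, cb m * ((m : ℝ) * y ^ (m - 1)) with hD
    have hfd : HasDerivAt f D y := hasDerivAt_cbsum hy1
    -- summability of the derivative series
    have hsum : Summable (fun m : ℕ => cb m * ((m : ℝ) * y ^ (m - 1))) := by
      apply Summable.of_norm
      apply Summable.of_nonneg_of_le (fun m => norm_nonneg _) (fun m => ?_)
        (summable_nat_mul_pow (abs_nonneg y) hy1)
      rw [Real.norm_eq_abs, abs_mul, abs_of_pos (cb_pos m), abs_mul, Nat.abs_cast, abs_pow]
      calc cb m * ((m:ℝ) * |y| ^ (m-1)) ≤ 1 * ((m:ℝ) * |y| ^ (m-1)) :=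
            mul_le_mul_of_nonneg_right (cb_le_one m) (by positivity)
        _ = (m:ℝ) * |y| ^ (m-1) := one_mul _
    -- shifted series
    have hshift : D = ∑' m : ℕ, cb (m+1) * (((m:ℝ)+1) * y ^ m) := by
      rw [hD, Summable.tsum_eq_zero_add hsum]
      simp
    have hyD : y * D = ∑' m : ℕ, cb m * ((m : ℝ) * y ^ m) := by
      rw [hD, ← tsum_mul_left]
      apply tsum_congr
      intro m
      rcases Nat.eq_zero_or_pos m with hm | hm
      · simp [hm]
      · have : y * (cb m * ((m:ℝ) * y ^ (m-1))) = cb m * ((m:ℝ) * (y ^ (m-1) * y)) := by ring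
        rw [this, ← pow_succ, Nat.sub_add_cancel hm]
    have hsum2 : Summable (fun m : ℕ => cb (m+1) * (((m:ℝ)+1) * y ^ m)) := by
      apply ((summable_nat_add_iff 1).2 hsum).congr
      intro m
      push_cast [Nat.add_sub_cancel]
      ring
    have hsum3 : Summable (fun m : ℕ => cb m * ((m : ℝ) * y ^ m)) := by
      have := hsum.mul_left y
      rwa [show (fun m : ℕ => y * (cb m * ((m:ℝ) * y ^ (m-1)))) = fun m : ℕ => cb m * ((m:ℝ) * y ^ m) from ?_] at this
      funext m
      rcases Nat.eq_zero_or_pos m with hm | hm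
      · simp [hm]
      · have : y * (cb m * ((m:ℝ) * y ^ (m-1))) = cb m * ((m:ℝ) * (y ^ (m-1) * y)) := by ring
        rw [this, ← pow_succ, Nat.sub_add_cancel hm]
    have hkey : (1 - y) * D = f y / 2 := by
      have : (1 - y) * D = D - y * D := by ring
      rw [this, hyD, hshift, ← Summable.tsum_sub hsum2 hsum3]
      have hfy : f y = ∑' m : ℕ, cb m * y ^ m := rfl
      rw [hfy, ← tsum_div_const]
      apply tsum_congr
      intro m
      have hc := cb_succ m
      have : cb (m+1) * ((m:ℝ)+1) = (2*m+1)/2 * cb m := by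
        have h2 : (2 * (m:ℝ) + 2) ≠ 0 := by positivity
        field_simp
        linarith [hc]
      rw [show cb (m+1) * (((m:ℝ)+1) * y ^ m) = (cb (m+1) * ((m:ℝ)+1)) * y ^ m from by ring, this]
      ring
    have hder : HasDerivAt h (2 * f y ^ 1 * D * (1 - y) + f y ^ 2 * (0 - 1)) y := by
      exact ((hfd.pow 2).mul ((hasDerivAt_const y 1).sub (hasDerivAt_id y)))
    have : 2 * f y ^ 1 * D * (1 - y) + f y ^ 2 * (0 - 1) = 0 := by
      linear_combination (2 * f y) * hkey
    rwa [this] at hder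
  have hint : IntervalIntegrable (fun _ : ℝ => (0:ℝ)) volume 0 z :=
    intervalIntegrable_const
  have := intervalIntegral.integral_eq_sub_of_hasDerivAt key hint
  rw [intervalIntegral.integral_const] at this
  have hz0 : h z = h 0 := by
    have : (0:ℝ) = h z - h 0 := by simpa using this
    linarith
  have hf0 : f 0 = 1 := by
    have : f 0 = ∑' m : ℕ, cb m * (0:ℝ) ^ m := rfl
    rw [this, tsum_eq_single 0 (fun m hm => by simp [zero_pow (by omega : m ≠ 0)])]
    simp [cb_zero]
  have : h 0 = 1 := by rw [hh]; simp [hf0]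
  rw [← hz0] at this
  exact this

lemma cbsum_eq {z : ℝ} (h0 : 0 ≤ z) (h1 : z < 1) :
    ∑' m : ℕ, cb m * z ^ m = 1 / Real.sqrt (1 - z) := by
  have hsq := cbsum_sq h0 h1
  have hpos : 0 < ∑' m : ℕ, cb m * z ^ m := by
    have hs := summable_cb_mul_pow (z := z) (by rwa [abs_of_nonneg h0])
    have h00 : (1:ℝ) ≤ ∑' m : ℕ, cb m * z ^ m := by
      have := Summable.le_tsum hs 0 (fun m _ => mul_nonneg (cb_pos m).le (pow_nonneg h0 m))
      simpa [cb_zero] using this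
    linarith
  have h1z : (0:ℝ) < 1 - z := by linarith
  have : (∑' m : ℕ, cb m * z ^ m) ^ 2 = 1 / (1 - z) := by
    field_simp at hsq ⊢
    linarith
  have := congrArg Real.sqrt this
  rwa [Real.sqrt_sq hpos.le, one_div, Real.sqrt_inv, ← one_div] at this

/-! ### Pochhammer lemmas -/

lemma poch_zero {x : ℝ} (hx : 0 < x) : poch x 0 = 1 := by
  simp [poch, div_self (Real.Gamma_pos_of_pos hx).ne']

lemma poch_succ {x : ℝ} (hx : 0 < x) (m : ℕ) : poch x (m + 1) = poch x m * (x + m) := by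
  rw [poch, poch]
  push_cast
  rw [show x + ((m:ℝ) + 1) = (x + (m:ℝ)) + 1 by ring,
    Real.Gamma_add_one (by positivity : x + (m:ℝ) ≠ 0)]
  ring

lemma poch_pos {x : ℝ} (hx : 0 < x) (m : ℕ) : 0 < poch x m :=
  div_pos (Real.Gamma_pos_of_pos (by positivity)) (Real.Gamma_pos_of_pos hx)

lemma poch_one_eq (m : ℕ) : poch 1 m = (Nat.factorial m : ℝ) := by
  induction m with
  | zero => simp [poch_zero one_pos]
  | succ m ih =>
    rw [poch_succ one_pos, ih, Nat.factorial_succ]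
    push_cast
    ring

lemma poch_half (m : ℕ) : poch (1/2) m = cb m * (Nat.factorial m : ℝ) := by
  induction m with
  | zero => rw [poch_zero (by norm_num : (0:ℝ) < 1/2), cb_zero]; simp
  | succ m ih =>
    rw [poch_succ (by norm_num : (0:ℝ) < 1/2), ih, Nat.factorial_succ]
    push_cast
    linear_combination (-(Nat.factorial m : ℝ)/2) * cb_succ m

lemma gamma_dup (N : ℕ) (hN : 1 ≤ N) (m : ℕ) :
    Real.Gamma ((N:ℝ) + 2*m)
      = Real.Gamma N * 4^m * (poch ((N:ℝ)/2) m * poch (((N:ℝ)+1)/2) m) := by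
  have hN0 : (0:ℝ) < N := by exact_mod_cast hN
  have hN2 : (0:ℝ) < (N:ℝ)/2 := by positivity
  have hN12 : (0:ℝ) < ((N:ℝ)+1)/2 := by positivity
  induction m with
  | zero => simp [poch_zero hN2, poch_zero hN12]
  | succ m ih =>
    have h1 : (N:ℝ) + 2*((m:ℝ)+1) = ((N:ℝ) + 2*m + 1) + 1 := by ring
    push_cast
    rw [h1, Real.Gamma_add_one (by positivity : (N:ℝ) + 2*(m:ℝ) + 1 ≠ 0),
      show (N:ℝ) + 2*(m:ℝ) + 1 = ((N:ℝ) + 2*(m:ℝ)) + 1 by ring,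
      Real.Gamma_add_one (by positivity : (N:ℝ) + 2*(m:ℝ) ≠ 0)]
    rw [show ((N:ℝ) + 2*(m:ℝ)) = ((N:ℝ) + 2*((m:ℕ):ℝ)) by push_cast; ring] at ih ⊢
    rw [ih, poch_succ hN2, poch_succ hN12]
    push_cast
    ring

/-! ### besselI0 basics -/

lemma besselI0_term_nonneg (s : ℝ) (m : ℕ) :
    0 ≤ (s/2)^(2*m) / ((Nat.factorial m : ℝ))^2 := by
  apply div_nonneg _ (by positivity)
  rw [pow_mul]
  positivity

lemma besselI0_summable (s : ℝ) :
    Summable (fun m : ℕ => (s/2)^(2*m) / ((Nat.factorial m : ℝ))^2) := by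
  apply Summable.of_nonneg_of_le (fun m => besselI0_term_nonneg s m) (fun m => ?_)
    (Real.summable_pow_div_factorial ((s/2)^2))
  rw [pow_mul]
  have hf : (1:ℝ) ≤ (Nat.factorial m : ℝ) := by
    exact_mod_cast Nat.one_le_iff_ne_zero.mpr m.factorial_ne_zero
  apply div_le_div_of_nonneg_left (by positivity) (by positivity) (by nlinarith)

lemma besselI0_nonneg (s : ℝ) : 0 ≤ besselI0 s :=
  tsum_nonneg (fun m => besselI0_term_nonneg s m)

lemma measurable_besselI0 : Measurable besselI0 := by
  have h : besselI0 = fun s =>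
      (∑' m : ℕ, ENNReal.ofReal ((s/2)^(2*m) / ((Nat.factorial m : ℝ))^2)).toReal := by
    funext s
    rw [besselI0, ← ENNReal.ofReal_tsum_of_nonneg (fun m => besselI0_term_nonneg s m)
        (besselI0_summable s),
      ENNReal.toReal_ofReal (tsum_nonneg (fun m => besselI0_term_nonneg s m))]
  rw [h]
  apply Measurable.ennreal_toReal
  apply Measurable.ennreal_tsum
  intro m
  apply Measurable.ennreal_ofReal
  exact ((measurable_id.div_const 2).pow_const (2*m)).div_const _

/-! ### integrals of s^k exp(-(t s)) -/

lemma pow_le_exp_of_nonneg {x : ℝ} (hx : 0 ≤ x) (k : ℕ) :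
    x ^ k / (Nat.factorial k : ℝ) ≤ Real.exp x := by
  calc x ^ k / (Nat.factorial k : ℝ)
      ≤ ∑ i ∈ Finset.range (k+1), x ^ i / (Nat.factorial i : ℝ) := by
        apply Finset.single_le_sum (f := fun i => x ^ i / (Nat.factorial i : ℝ))
          (fun i _ => by positivity) (Finset.self_mem_range_succ k)
    _ ≤ Real.exp x := Real.sum_le_exp_of_nonneg hx (k+1)

lemma integrableOn_pow_mul_exp {t : ℝ} (ht : 1 < t) (k : ℕ) :
    IntegrableOn (fun s : ℝ => s ^ k * Real.exp (-(t * s))) (Set.Ioi (0:ℝ)) := by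
  have h0 : (0:ℝ) < t - 1 := by linarith
  apply Integrable.mono
    (((exp_neg_integrableOn_Ioi 0 one_pos)).const_mul
      ((Nat.factorial k : ℝ) / (t-1)^k))
  · exact ((continuous_pow k).mul (((continuous_const.mul continuous_id).neg).rexp)).aestronglyMeasurable
  · filter_upwards [ae_restrict_mem measurableSet_Ioi] with s hs
    have hs0 : (0:ℝ) < s := hs
    rw [Real.norm_eq_abs, Real.norm_eq_abs, abs_of_nonneg (by positivity),
      abs_of_nonneg (by positivity)]
    have hb : s ^ k ≤ (Nat.factorial k : ℝ) / (t-1)^k * Real.exp ((t-1)*s) := by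
      have h := pow_le_exp_of_nonneg (by positivity : (0:ℝ) ≤ (t-1)*s) k
      rw [mul_pow, div_le_iff₀ (by positivity : (0:ℝ) < (Nat.factorial k : ℝ))] at h
      rw [div_mul_eq_mul_div, le_div_iff₀ (by positivity : (0:ℝ) < (t-1)^k)]
      nlinarith [h]
    calc s ^ k * Real.exp (-(t*s))
        ≤ ((Nat.factorial k : ℝ) / (t-1)^k * Real.exp ((t-1)*s)) * Real.exp (-(t*s)) :=
          mul_le_mul_of_nonneg_right hb (Real.exp_nonneg _)
      _ = (Nat.factorial k : ℝ) / (t-1)^k * Real.exp (-s) := by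
          rw [mul_assoc, ← Real.exp_add]; ring_nf
      _ = (Nat.factorial k : ℝ) / (t-1)^k * Real.exp (-1*s) := by norm_num

lemma integral_pow_mul_exp {t : ℝ} (ht : 1 < t) (k : ℕ) :
    ∫ s in Set.Ioi (0:ℝ), s ^ k * Real.exp (-(t * s))
      = Real.Gamma (k + 1) / t ^ (k+1) := by
  have h := Real.integral_rpow_mul_exp_neg_mul_Ioi
    (by positivity : (0:ℝ) < (k:ℝ)+1) (by linarith : (0:ℝ) < t)
  rw [show ((k:ℝ)+1) - 1 = (k:ℝ) by ring] at h
  have heq : ∀ s ∈ Set.Ioi (0:ℝ), s ^ k * Real.exp (-(t * s))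
      = s ^ ((k:ℝ)) * Real.exp (-(t * s)) := by
    intro s hs
    rw [Real.rpow_natCast]
  rw [setIntegral_congr_fun measurableSet_Ioi heq, h]
  rw [show ((k:ℝ)+1) = ((k+1 : ℕ):ℝ) by push_cast; ring, Real.rpow_natCast]
  push_cast
  rw [div_pow, one_pow]
  have ht0 : t ^ (k+1) ≠ 0 := by positivity
  field_simp

lemma cb_eq (m : ℕ) : cb m = ((2*m).factorial : ℝ) / (4^m * ((m.factorial : ℝ))^2) := by
  have h := Nat.choose_mul_factorial_mul_factorial (show m ≤ 2*m by omega)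
  have h2 : 2*m - m = m := by omega
  rw [h2] at h
  have h' : ((2*m).choose m : ℝ) * (m.factorial : ℝ) * (m.factorial : ℝ) = ((2*m).factorial : ℝ) := by
    exact_mod_cast congrArg Nat.cast h
  rw [cb, Nat.centralBinom]
  have hf : ((m.factorial : ℝ)) ≠ 0 := by positivity
  field_simp
  linear_combination h'

lemma laplace_bessel_core {t : ℝ} (ht : 1 < t) (N : ℕ) (hN : 1 ≤ N) :
    IntegrableOn (fun s : ℝ => s ^ (N - 1) * Real.exp (-(t * s)) * besselI0 s) (Set.Ioi 0) ∧
    ∫ s in Set.Ioi (0:ℝ), s ^ (N - 1) * Real.exp (-(t * s)) * besselI0 s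
      = Real.Gamma N * (1 / t ^ N) * hyp2F1one ((N:ℝ)/2) (((N:ℝ)+1)/2) (1 / t ^ 2) := by
  have ht0 : (0:ℝ) < t := by linarith
  set F : ℕ → ℝ → ℝ := fun m s =>
    (s ^ (N - 1) * Real.exp (-(t * s))) * ((s/2)^(2*m) / ((Nat.factorial m : ℝ))^2) with hF
  have hFeq : ∀ s : ℝ, s ^ (N-1) * Real.exp (-(t*s)) * besselI0 s = ∑' m, F m s := by
    intro s
    rw [besselI0]
    exact tsum_mul_left.symm
  have hFalg : ∀ m s, F m s
      = (1/((4:ℝ)^m * ((Nat.factorial m : ℝ))^2)) * (s ^ (N - 1 + 2*m) * Real.exp (-(t*s))) := by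
    intro m s
    have h2 : (s/2)^(2*m) = s^(2*m) / 4^m := by
      rw [div_pow, pow_mul, pow_mul]; norm_num
    simp only [hF]
    rw [h2, pow_add]
    have h4 : ((4:ℝ))^m ≠ 0 := by positivity
    have hfm : ((Nat.factorial m : ℝ))^2 ≠ 0 := by positivity
    field_simp
  have hFint : ∀ m, IntegrableOn (F m) (Set.Ioi 0) := by
    intro m
    have heq : F m = fun s => (1/((4:ℝ)^m * ((Nat.factorial m : ℝ))^2))
        * (s ^ (N-1+2*m) * Real.exp (-(t*s))) := funext (hFalg m)
    rw [heq]
    exact (integrableOn_pow_mul_exp ht _).const_mul _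
  set A : ℕ → ℝ := fun m =>
    Real.Gamma ((N:ℝ) + 2*m) / ((4:ℝ)^m * ((Nat.factorial m : ℝ))^2 * t^(N + 2*m)) with hA
  have hGam : ∀ m : ℕ, Real.Gamma ((N:ℝ) + 2*m) = ((N + 2*m - 1).factorial : ℝ) := by
    intro m
    have h1 : (N:ℝ) + 2*m = ((N + 2*m - 1 : ℕ):ℝ) + 1 := by
      rw [Nat.cast_sub (by omega)]; push_cast; ring
    rw [h1, Real.Gamma_nat_eq_factorial]
  have hFval : ∀ m, ∫ s in Set.Ioi (0:ℝ), F m s = A m := by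
    intro m
    simp only [hFalg]
    rw [MeasureTheory.integral_const_mul, integral_pow_mul_exp ht]
    have hexp : N - 1 + 2*m + 1 = N + 2*m := by omega
    have hcast : ((N - 1 + 2*m : ℕ):ℝ) + 1 = (N:ℝ) + 2*m := by
      have h5 : (N - 1 + 2*m : ℕ) = N + 2*m - 1 := by omega
      rw [h5, Nat.cast_sub (by omega : 1 ≤ N + 2*m)]; push_cast; ring
    rw [hexp, hcast]
    simp only [hA]
    have h4 : ((4:ℝ))^m ≠ 0 := by positivity
    have hfm : ((Nat.factorial m : ℝ))^2 ≠ 0 := by positivity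
    have htN : t^(N+2*m) ≠ 0 := by positivity
    field_simp
  have hA_nonneg : ∀ m, 0 ≤ A m := fun m =>
    div_nonneg (Real.Gamma_nonneg_of_nonneg (by positivity)) (by positivity)
  -- summability of A
  have hfact : ∀ a b : ℕ, (a + b).factorial ≤ a.factorial * (a + b)^b := by
    intro a b
    induction b with
    | zero => simp
    | succ b ih =>
      rw [show a + (b+1) = (a+b)+1 from rfl, Nat.factorial_succ]
      calc (a+b+1) * (a+b).factorial ≤ (a+b+1) * (a.factorial * (a+b)^b) :=
            Nat.mul_le_mul_left _ ih
        _ ≤ a.factorial * ((a+b+1) * (a+b+1)^b) := by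
            rw [← mul_assoc, mul_comm (a+b+1) a.factorial, mul_assoc]
            exact Nat.mul_le_mul_left _ (Nat.mul_le_mul_left _ (Nat.pow_le_pow_left (by omega) b))
        _ = a.factorial * (a+b+1)^(b+1) := by rw [← pow_succ']
  set x : ℝ := 1/t^2 with hx
  have hx0 : 0 < x := by positivity
  have hx1 : x < 1 := by
    rw [hx, div_lt_one (by positivity)]; nlinarith
  have hxpow : ∀ m : ℕ, x ^ m = 1 / t^(2*m) := by
    intro m; rw [hx, div_pow, one_pow, pow_mul]
  have hbound : ∀ m : ℕ, A m ≤ (((N:ℝ)+2)^(N-1) * (1/t^N)) * ((((m:ℝ))+1)^(N-1) * x^m) := by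
    intro m
    have hfac : ((N + 2*m - 1).factorial : ℝ)
        ≤ ((2*m).factorial : ℝ) * ((2*(m:ℝ) + (N:ℝ)))^(N-1) := by
      have h := hfact (2*m) (N-1)
      have he : 2*m + (N-1) = N + 2*m - 1 := by omega
      rw [he] at h
      calc ((N + 2*m - 1).factorial : ℝ)
          ≤ ((2*m).factorial : ℝ) * (((2*m + (N-1))^(N-1) : ℕ) : ℝ) := by
            rw [he]
            exact_mod_cast h
        _ ≤ ((2*m).factorial : ℝ) * ((2*(m:ℝ) + (N:ℝ)))^(N-1) := by
            apply mul_le_mul_of_nonneg_left _ (by positivity)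
            have h7 : (((2*m + (N-1))^(N-1) : ℕ) : ℝ) = ((2*m + (N-1) : ℕ):ℝ)^(N-1) := by
              push_cast; ring
            rw [h7]
            apply pow_le_pow_left₀ (by positivity)
            have : ((2*m + (N-1) : ℕ):ℝ) ≤ 2*(m:ℝ) + (N:ℝ) := by
              have h8 : (2*m + (N-1) : ℕ) ≤ 2*m + N := by omega
              calc ((2*m + (N-1) : ℕ):ℝ) ≤ ((2*m + N : ℕ):ℝ) := by exact_mod_cast h8
                _ = 2*(m:ℝ) + (N:ℝ) := by push_cast; ring
            exact this
    calc A m = ((N + 2*m - 1).factorial : ℝ) / ((4:ℝ)^m * ((Nat.factorial m : ℝ))^2 * t^(N + 2*m)) := by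
          simp only [hA]; rw [hGam m]
      _ ≤ (((2*m).factorial : ℝ) * ((2*(m:ℝ) + (N:ℝ)))^(N-1))
            / ((4:ℝ)^m * ((Nat.factorial m : ℝ))^2 * t^(N + 2*m)) := by
          gcongr
      _ = cb m * ((2*(m:ℝ) + (N:ℝ))^(N-1) / t^(N + 2*m)) := by
          rw [cb_eq]; ring
      _ ≤ 1 * ((2*(m:ℝ) + (N:ℝ))^(N-1) / t^(N + 2*m)) := by
          apply mul_le_mul_of_nonneg_right (cb_le_one m)
          positivity
      _ = (2*(m:ℝ) + (N:ℝ))^(N-1) * ((1/t^N) * x^m) := by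
          rw [hxpow, pow_add]
          field_simp
      _ ≤ ((((N:ℝ)+2) * ((m:ℝ)+1))^(N-1)) * ((1/t^N) * x^m) := by
          apply mul_le_mul_of_nonneg_right _ (by positivity)
          apply pow_le_pow_left₀ (by positivity)
          have hN1 : (1:ℝ) ≤ (N:ℝ) := by exact_mod_cast hN
          nlinarith [Nat.cast_nonneg (α := ℝ) m]
      _ = (((N:ℝ)+2)^(N-1) * (1/t^N)) * ((((m:ℝ))+1)^(N-1) * x^m) := by
          rw [mul_pow]; ring
  have hs1 : Summable (fun m : ℕ => ((m:ℝ))^(N-1) * x^m) :=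
    summable_pow_mul_geometric_of_norm_lt_one (N-1)
      (by rw [Real.norm_eq_abs, abs_of_pos hx0]; exact hx1)
  have hs2 : Summable (fun m : ℕ => (((m:ℝ))+1)^(N-1) * x^m) := by
    have h3 := (summable_nat_add_iff 1).2 hs1
    have h4 := h3.mul_left x⁻¹
    apply h4.congr
    intro m
    push_cast
    rw [pow_succ]
    field_simp
  have hA_sum : Summable A :=
    Summable.of_nonneg_of_le hA_nonneg hbound (hs2.mul_left _)
  -- measurability
  have hmeas : ∀ m, AEStronglyMeasurable (F m) (volume.restrict (Set.Ioi 0)) := by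
    intro m
    apply Continuous.aestronglyMeasurable
    simp only [hF]
    exact ((continuous_pow (N-1)).mul
        (Real.continuous_exp.comp (continuous_const.mul continuous_id).neg)).mul
      (((continuous_id.div_const 2).pow (2*m)).div_const _)
  have hnn : ∀ m, 0 ≤ᵐ[volume.restrict (Set.Ioi 0)] F m := by
    intro m
    filter_upwards [ae_restrict_mem measurableSet_Ioi] with s hs
    have hs0 : (0:ℝ) < s := hs
    simp only [hF]
    have := besselI0_term_nonneg s m
    positivity
  have hlint' : ∀ m, ∫⁻ s in Set.Ioi (0:ℝ), ENNReal.ofReal (F m s)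
      = ENNReal.ofReal (A m) := by
    intro m
    rw [← ofReal_integral_eq_lintegral_ofReal (hFint m) (hnn m), hFval m]
  have hlint : ∀ m, ∫⁻ s in Set.Ioi (0:ℝ), (‖F m s‖₊ : ℝ≥0∞) = ENNReal.ofReal (A m) := by
    intro m
    rw [← hlint' m]
    apply lintegral_congr_ae
    filter_upwards [hnn m] with s hs
    exact Real.enorm_eq_ofReal hs
  have hlintsum : ∑' m, ∫⁻ s in Set.Ioi (0:ℝ), (‖F m s‖₊ : ℝ≥0∞) ≠ ⊤ := by
    rw [tsum_congr hlint, ← ENNReal.ofReal_tsum_of_nonneg hA_nonneg hA_sum]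
    exact ENNReal.ofReal_ne_top
  constructor
  · constructor
    · apply Measurable.aestronglyMeasurable
      exact ((measurable_id.pow_const (N-1)).mul
        ((measurable_const.mul measurable_id).neg.exp)).mul measurable_besselI0
    · rw [hasFiniteIntegral_iff_ofReal ?hnn2]
      case hnn2 =>
        filter_upwards [ae_restrict_mem measurableSet_Ioi] with s hs
        have hs0 : (0:ℝ) < s := hs
        have := besselI0_nonneg s
        positivity
      have hcongr : ∫⁻ s in Set.Ioi (0:ℝ), ENNReal.ofReal (s ^ (N-1) * Real.exp (-(t*s)) * besselI0 s)
          = ∫⁻ s in Set.Ioi (0:ℝ), ∑' m, ENNReal.ofReal (F m s) := by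
        apply lintegral_congr_ae
        filter_upwards [ae_restrict_mem measurableSet_Ioi] with s hs
        rw [hFeq s]
        rw [ENNReal.ofReal_tsum_of_nonneg]
        · intro m
          simp only [hF]
          have hs0 : (0:ℝ) < s := hs
          have := besselI0_term_nonneg s m
          positivity
        · exact (besselI0_summable s).mul_left _
      rw [hcongr, lintegral_tsum (fun m => ((hmeas m).aemeasurable).ennreal_ofReal),
        tsum_congr hlint', ← ENNReal.ofReal_tsum_of_nonneg hA_nonneg hA_sum]
      exact ENNReal.ofReal_lt_top
  · have hstep : ∫ s in Set.Ioi (0:ℝ), s ^ (N-1) * Real.exp (-(t*s)) * besselI0 s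
        = ∑' m, A m := by
      simp only [hFeq]
      rw [MeasureTheory.integral_tsum hmeas hlintsum]
      exact tsum_congr hFval
    rw [hstep, hyp2F1one, ← tsum_mul_left]
    apply tsum_congr
    intro m
    simp only [hA]
    simp only [poch_one_eq]
    rw [gamma_dup N hN m, hxpow] at *
    have h4 : ((4:ℝ))^m ≠ 0 := by positivity
    have hfm : ((Nat.factorial m : ℝ)) ≠ 0 := by positivity
    have htN : t ≠ 0 := by positivity
    rw [pow_add]
    field_simp

lemma hyp_half_one {z : ℝ} (h0 : 0 ≤ z) (h1 : z < 1) :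
    hyp2F1one (1/2) 1 z = 1 / Real.sqrt (1 - z) := by
  rw [hyp2F1one, ← cbsum_eq h0 h1]
  apply tsum_congr
  intro m
  rw [poch_half, poch_one_eq]
  have hfm : ((Nat.factorial m : ℝ)) ≠ 0 := by positivity
  field_simp

lemma laplace_I0 {v : ℝ} (hv : 1 < v) :
    IntegrableOn (fun s : ℝ => Real.exp (-(v*s)) * besselI0 s) (Set.Ioi 0) ∧
    ∫ s in Set.Ioi (0:ℝ), Real.exp (-(v*s)) * besselI0 s = 1 / Real.sqrt (v^2 - 1) := by
  have h := laplace_bessel_core hv 1 le_rfl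
  have hfun : (fun s : ℝ => s ^ (1-1) * Real.exp (-(v*s)) * besselI0 s)
      = fun s => Real.exp (-(v*s)) * besselI0 s := by
    funext s; simp
  rw [hfun] at h
  refine ⟨h.1, ?_⟩
  rw [h.2]
  have hv0 : (0:ℝ) < v := by linarith
  have hz0 : (0:ℝ) ≤ 1/v^2 := by positivity
  have hz1 : 1/v^2 < 1 := by rw [div_lt_one (by positivity)]; nlinarith
  rw [show (((1:ℕ):ℝ))/2 = 1/2 by norm_num, show (((1:ℕ):ℝ)+1)/2 = 1 by norm_num,
    hyp_half_one hz0 hz1, show ((1:ℕ):ℝ) = (1:ℝ) by norm_num, Real.Gamma_one]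
  have h2 : Real.sqrt (1 - 1/v^2) * v = Real.sqrt (v^2 - 1) := by
    rw [show v^2 - 1 = (1 - 1/v^2) * v^2 by field_simp,
      Real.sqrt_mul (by nlinarith : (0:ℝ) ≤ 1 - 1/v^2), Real.sqrt_sq hv0.le]
  rw [← h2, pow_one]
  have hsp : 0 < Real.sqrt (1 - 1/v^2) := Real.sqrt_pos.2 (by nlinarith)
  field_simp

lemma arcosh_integral {a b : ℝ} (ha : 1 ≤ a) (hab : a < b) :
    IntegrableOn (fun v : ℝ => 1 / Real.sqrt (v^2 - 1)) (Set.Ioc a b) ∧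
    ∫ v in Set.Ioc a b, 1 / Real.sqrt (v^2 - 1)
      = Real.log (b + Real.sqrt (b^2-1)) - Real.log (a + Real.sqrt (a^2-1)) := by
  have hmeas : Measurable (fun v : ℝ => 1 / Real.sqrt (v^2 - 1)) := by
    simp only [one_div]
    exact (Real.continuous_sqrt.measurable.comp
      ((measurable_id.pow_const 2).sub measurable_const)).inv
  have hbnd : IntervalIntegrable (fun v : ℝ => (v - 1) ^ (-(1/2) : ℝ)) volume a b := by
    have h1 := intervalIntegral.intervalIntegrable_rpow' (a := a - 1) (b := b - 1)
      (r := -(1/2)) (by norm_num)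
    have h2 := h1.comp_sub_right 1
    simpa using h2
  have hInt : IntegrableOn (fun v : ℝ => 1 / Real.sqrt (v^2 - 1)) (Set.Ioc a b) := by
    apply Integrable.mono hbnd.1 hmeas.aestronglyMeasurable
    filter_upwards [ae_restrict_mem measurableSet_Ioc] with v hv
    have hv1 : 1 < v := lt_of_le_of_lt ha hv.1
    have hpos : (0:ℝ) < v^2 - 1 := by nlinarith
    have hposm : (0:ℝ) < v - 1 := by linarith
    have hq : 0 < Real.sqrt (v^2-1) := Real.sqrt_pos.2 hpos
    rw [Real.norm_eq_abs, Real.norm_eq_abs, abs_of_pos (by positivity),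
      abs_of_pos (Real.rpow_pos_of_pos hposm _)]
    rw [Real.rpow_neg hposm.le, ← Real.sqrt_eq_rpow, ← one_div]
    have hle : Real.sqrt (v-1) ≤ Real.sqrt (v^2-1) := Real.sqrt_le_sqrt (by nlinarith)
    have hqm : 0 < Real.sqrt (v-1) := Real.sqrt_pos.2 hposm
    exact one_div_le_one_div_of_le hqm hle
  refine ⟨hInt, ?_⟩
  have hderiv : ∀ v ∈ Set.Ioo a b, HasDerivAt (fun y : ℝ => Real.log (y + Real.sqrt (y^2-1)))
      (1 / Real.sqrt (v^2-1)) v := by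
    intro v hv
    have hv1 : 1 < v := lt_of_le_of_lt ha hv.1
    have hpos : (0:ℝ) < v^2 - 1 := by nlinarith
    have hq : 0 < Real.sqrt (v^2-1) := Real.sqrt_pos.2 hpos
    have h1 : HasDerivAt (fun y : ℝ => y^2 - 1) (2*v) v := by
      simpa using ((hasDerivAt_pow 2 v).sub_const 1)
    have h2 := (Real.hasDerivAt_sqrt hpos.ne').comp v h1
    have h3 := (hasDerivAt_id v).add h2
    have h4 : v + Real.sqrt (v^2-1) ≠ 0 := by nlinarith [hq]
    have h5 := h3.log h4
    refine h5.congr_deriv ?_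
    show (1 + 1 / (2 * √(v ^ 2 - 1)) * (2 * v)) / (v + √(v^2-1)) = 1 / √(v^2-1)
    field_simp
    ring
  have hII : IntervalIntegrable (fun v : ℝ => 1 / Real.sqrt (v^2 - 1)) volume a b := by
    constructor
    · exact hInt
    · rw [Set.Ioc_eq_empty (by linarith)]
      exact integrableOn_empty
  have hcont : ∀ c : ℝ, 1 ≤ c → Filter.Tendsto (fun y : ℝ => Real.log (y + Real.sqrt (y^2-1)))
      (nhds c) (nhds (Real.log (c + Real.sqrt (c^2-1)))) := by
    intro c hc
    have hca : ContinuousAt (fun y : ℝ => Real.log (y + Real.sqrt (y^2-1))) c := by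
      apply ContinuousAt.log
      · exact continuousAt_id.add ((Real.continuous_sqrt.continuousAt).comp
          ((continuousAt_id.pow 2).sub continuousAt_const))
      · nlinarith [Real.sqrt_nonneg (c^2-1)]
    exact hca.tendsto
  have hFTC := intervalIntegral.integral_eq_sub_of_hasDerivAt_of_tendsto hab hderiv hII
    ((hcont a ha).mono_left nhdsWithin_le_nhds)
    ((hcont b (by linarith)).mono_left nhdsWithin_le_nhds)
  rw [← intervalIntegral.integral_of_le hab.le, hFTC]

lemma frullani_bessel {ω u : ℝ} (hω : 1 ≤ ω) (hu : 0 < u) :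
    ∫ s in Set.Ioi (0:ℝ), (Real.exp (-u * s) - 1) * (s⁻¹ * Real.exp (-ω * s) * besselI0 s)
      = Real.log (ω + Real.sqrt (ω^2-1))
        - Real.log ((ω+u) + Real.sqrt ((ω+u)^2-1)) := by
  set t : ℝ := ω + u with htdef
  have hωt : ω < t := by rw [htdef]; linarith
  have ht1 : 1 < t := by linarith
  -- inner interval integral of the exponential
  have hinner : ∀ s : ℝ, 0 < s → ∫ v in Set.Ioc ω t, Real.exp (-(v*s))
      = (Real.exp (-(ω*s)) - Real.exp (-(t*s)))/s := by
    intro s hs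
    rw [← intervalIntegral.integral_of_le hωt.le]
    have hd : ∀ v ∈ Set.uIcc ω t, HasDerivAt (fun w : ℝ => -Real.exp (-(w*s))/s)
        (Real.exp (-(v*s))) v := by
      intro v _
      have h1 : HasDerivAt (fun w : ℝ => -(w*s)) (-s) v := by
        exact (((hasDerivAt_id' v).mul_const s).neg).congr_deriv (by ring)
      have h2 := (h1.exp.neg).div_const s
      refine h2.congr_deriv ?_
      field_simp
    have hci : IntervalIntegrable (fun v : ℝ => Real.exp (-(v*s))) volume ω t :=
      (Real.continuous_exp.comp (continuous_id.mul continuous_const).neg).intervalIntegrable ω t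
    rw [intervalIntegral.integral_eq_sub_of_hasDerivAt hd hci]
    field_simp
    ring
  -- pointwise rewriting of the integrand
  have hsign : ∀ s ∈ Set.Ioi (0:ℝ),
      (Real.exp (-u * s) - 1) * (s⁻¹ * Real.exp (-ω * s) * besselI0 s)
      = -(((Real.exp (-(ω*s)) - Real.exp (-(t*s)))/s) * besselI0 s) := by
    intro s hs
    have hs0 : (s:ℝ) ≠ 0 := ne_of_gt hs
    rw [neg_mul u s, neg_mul ω s]
    have hexp : Real.exp (-(t*s)) = Real.exp (-(ω*s)) * Real.exp (-(u*s)) := by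
      rw [← Real.exp_add, htdef]; ring_nf
    rw [hexp]
    field_simp
    ring
  rw [setIntegral_congr_fun measurableSet_Ioi hsign, integral_neg]
  -- now compute J := ∫ g where g s = ((e^{-ωs}-e^{-ts})/s) I₀ s via Tonelli
  have hgm : Measurable (fun s : ℝ => ((Real.exp (-(ω*s)) - Real.exp (-(t*s)))/s) * besselI0 s) := by
    apply Measurable.mul _ measurable_besselI0
    apply Measurable.div _ measurable_id
    exact ((measurable_const.mul measurable_id).neg.exp).sub
      ((measurable_const.mul measurable_id).neg.exp)
  have hgnn : 0 ≤ᵐ[volume.restrict (Set.Ioi (0:ℝ))]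
      (fun s : ℝ => ((Real.exp (-(ω*s)) - Real.exp (-(t*s)))/s) * besselI0 s) := by
    filter_upwards [ae_restrict_mem measurableSet_Ioi] with s hs
    have hs0 : (0:ℝ) < s := hs
    apply mul_nonneg _ (besselI0_nonneg s)
    apply div_nonneg _ hs0.le
    have : Real.exp (-(t*s)) ≤ Real.exp (-(ω*s)) := by
      apply Real.exp_le_exp.2
      nlinarith
    linarith
  rw [integral_eq_lintegral_of_nonneg_ae hgnn hgm.aestronglyMeasurable]
  -- chain of lintegral equalities
  have hstep1 : ∫⁻ s in Set.Ioi (0:ℝ),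
      ENNReal.ofReal (((Real.exp (-(ω*s)) - Real.exp (-(t*s)))/s) * besselI0 s)
      = ∫⁻ s in Set.Ioi (0:ℝ), ∫⁻ v in Set.Ioc ω t,
          ENNReal.ofReal (Real.exp (-(v*s)) * besselI0 s) := by
    apply setLIntegral_congr_fun measurableSet_Ioi
    intro s hs
    dsimp only
    rw [← hinner s hs]
    have hpull : (∫ v in Set.Ioc ω t, Real.exp (-(v*s))) * besselI0 s
        = ∫ v in Set.Ioc ω t, Real.exp (-(v*s)) * besselI0 s := by
      exact (integral_mul_const _ _).symm
    rw [hpull]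
    rw [← ofReal_integral_eq_lintegral_ofReal]
    · apply Integrable.mul_const
      apply Continuous.integrableOn_Ioc
      exact Real.continuous_exp.comp (continuous_id.mul continuous_const).neg
    · apply Filter.Eventually.of_forall
      intro v
      exact mul_nonneg (Real.exp_nonneg _) (besselI0_nonneg s)
  have hswap : ∫⁻ s in Set.Ioi (0:ℝ), ∫⁻ v in Set.Ioc ω t,
        ENNReal.ofReal (Real.exp (-(v*s)) * besselI0 s)
      = ∫⁻ v in Set.Ioc ω t, ∫⁻ s in Set.Ioi (0:ℝ),
        ENNReal.ofReal (Real.exp (-(v*s)) * besselI0 s) := by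
    apply lintegral_lintegral_swap
    apply Measurable.aemeasurable
    apply Measurable.ennreal_ofReal
    exact ((Real.continuous_exp.comp
        (continuous_snd.mul continuous_fst).neg).measurable).mul
      (measurable_besselI0.comp measurable_fst)
  have hstep2 : ∫⁻ v in Set.Ioc ω t, ∫⁻ s in Set.Ioi (0:ℝ),
        ENNReal.ofReal (Real.exp (-(v*s)) * besselI0 s)
      = ∫⁻ v in Set.Ioc ω t, ENNReal.ofReal (1 / Real.sqrt (v^2 - 1)) := by
    apply setLIntegral_congr_fun measurableSet_Ioc
    intro v hv
    dsimp only
    have hv1 : 1 < v := lt_of_le_of_lt hω hv.1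
    rw [← ofReal_integral_eq_lintegral_ofReal (laplace_I0 hv1).1
      (Filter.Eventually.of_forall (fun s => mul_nonneg (Real.exp_nonneg _) (besselI0_nonneg s)))]
    rw [(laplace_I0 hv1).2]
  have harc := arcosh_integral hω hωt
  have hstep3 : ∫⁻ v in Set.Ioc ω t, ENNReal.ofReal (1 / Real.sqrt (v^2 - 1))
      = ENNReal.ofReal (Real.log (t + Real.sqrt (t^2-1)) - Real.log (ω + Real.sqrt (ω^2-1))) := by
    rw [← ofReal_integral_eq_lintegral_ofReal harc.1
      (Filter.Eventually.of_forall (fun v => by positivity))]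
    rw [harc.2]
  rw [hstep1, hswap, hstep2, hstep3]
  have hAB : Real.log (ω + Real.sqrt (ω^2-1)) ≤ Real.log (t + Real.sqrt (t^2-1)) := by
    apply Real.log_le_log (by nlinarith [Real.sqrt_nonneg (ω^2-1)])
    have := Real.sqrt_le_sqrt (show ω^2-1 ≤ t^2-1 by nlinarith)
    linarith
  rw [ENNReal.toReal_ofReal (by linarith)]
  ring

/-- The general eppf formula of a homogeneous normalized CRM, specialized
to the Bessel intensity `ρ_B(s) = s⁻¹ e^{-ωs} I₀(s)`, equals the explicit eppf
`p_B(n_1,…,n_k; ω, κ)` of the normalized Bessel random measure. -/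
theorem eppf_normalized_bessel
    (ω : ℝ) (hω : 1 ≤ ω) (κ : ℝ) (hκ : 0 < κ)
    (k : ℕ) (hk : 1 ≤ k) (nv : Fin k → ℕ) (hnv : ∀ j, 1 ≤ nv j)
    (n : ℕ) (hn : n = ∑ j, nv j) :
    (∫ u in Set.Ioi (0:ℝ),
        (u ^ (n - 1) / Real.Gamma n) *
          Real.exp (κ * ∫ s in Set.Ioi (0:ℝ),
            (Real.exp (-u * s) - 1) * (s⁻¹ * Real.exp (-ω * s) * besselI0 s)) *
          ∏ j, κ * ∫ s in Set.Ioi (0:ℝ),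
            s ^ (nv j) * Real.exp (-u * s) * (s⁻¹ * Real.exp (-ω * s) * besselI0 s))
      = κ ^ k *
          ∫ u in Set.Ioi (0:ℝ),
            (u ^ (n - 1) / Real.Gamma n) *
              ((ω + Real.sqrt (ω ^ 2 - 1)) /
                  (ω + u + Real.sqrt ((ω + u) ^ 2 - 1))) ^ κ *
              (1 / (u + ω) ^ n) *
              ∏ j, Real.Gamma (nv j) *
                hyp2F1one ((nv j : ℝ) / 2) (((nv j : ℝ) + 1) / 2) (1 / (u + ω) ^ 2) := by
  rw [← MeasureTheory.integral_const_mul]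
  apply setIntegral_congr_fun measurableSet_Ioi
  intro u hu
  dsimp only
  have hu0 : (0:ℝ) < u := hu
  have ht1 : 1 < u + ω := by linarith
  -- the exponential factor
  have hexp : Real.exp (κ * ∫ s in Set.Ioi (0:ℝ),
        (Real.exp (-u * s) - 1) * (s⁻¹ * Real.exp (-ω * s) * besselI0 s))
      = ((ω + Real.sqrt (ω ^ 2 - 1)) / (ω + u + Real.sqrt ((ω + u) ^ 2 - 1))) ^ κ := by
    rw [frullani_bessel hω hu0]
    have hA : 0 < ω + Real.sqrt (ω^2-1) := by nlinarith [Real.sqrt_nonneg (ω^2-1)]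
    have hB : 0 < (ω+u) + Real.sqrt ((ω+u)^2-1) := by nlinarith [Real.sqrt_nonneg ((ω+u)^2-1)]
    rw [Real.rpow_def_of_pos (div_pos hA hB), Real.log_div hA.ne' hB.ne']
    congr 1
    ring
  -- the product factors
  have hprod : ∀ j, (∫ s in Set.Ioi (0:ℝ),
        s ^ (nv j) * Real.exp (-u * s) * (s⁻¹ * Real.exp (-ω * s) * besselI0 s))
      = (Real.Gamma (nv j) * hyp2F1one ((nv j : ℝ)/2) (((nv j : ℝ)+1)/2) (1/(u+ω)^2))
          * (1/(u+ω)^(nv j)) := by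
    intro j
    have hpw : ∀ s ∈ Set.Ioi (0:ℝ),
        s ^ (nv j) * Real.exp (-u * s) * (s⁻¹ * Real.exp (-ω * s) * besselI0 s)
        = s ^ (nv j - 1) * Real.exp (-((u+ω) * s)) * besselI0 s := by
      intro s hs
      have hs0 : (s:ℝ) ≠ 0 := ne_of_gt hs
      have hnvj : 1 ≤ nv j := hnv j
      have h1 : s ^ (nv j) = s ^ (nv j - 1) * s := by
        conv_lhs => rw [show nv j = (nv j - 1) + 1 by omega]
        rw [pow_succ]
      have h2 : Real.exp (-(u*s)) * Real.exp (-(ω*s)) = Real.exp (-((u+ω)*s)) := by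
        rw [← Real.exp_add]; ring_nf
      rw [neg_mul u s, neg_mul ω s, h1, ← h2]
      field_simp
    rw [setIntegral_congr_fun measurableSet_Ioi hpw,
      (laplace_bessel_core ht1 (nv j) (hnv j)).2]
    ring
  rw [hexp]
  have hprodall : (∏ j, κ * ∫ s in Set.Ioi (0:ℝ),
        s ^ (nv j) * Real.exp (-u * s) * (s⁻¹ * Real.exp (-ω * s) * besselI0 s))
      = κ ^ k * ((∏ j, Real.Gamma (nv j)
          * hyp2F1one ((nv j : ℝ)/2) (((nv j : ℝ)+1)/2) (1/(u+ω)^2)) * (1/(u+ω)^n)) := by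
    calc (∏ j, κ * ∫ s in Set.Ioi (0:ℝ),
          s ^ (nv j) * Real.exp (-u * s) * (s⁻¹ * Real.exp (-ω * s) * besselI0 s))
        = ∏ j, κ * ((Real.Gamma (nv j)
            * hyp2F1one ((nv j : ℝ)/2) (((nv j : ℝ)+1)/2) (1/(u+ω)^2)) * (1/(u+ω)^(nv j))) := by
          exact Finset.prod_congr rfl (fun j _ => by rw [hprod j])
      _ = (∏ _j : Fin k, κ) * ((∏ j, Real.Gamma (nv j)
            * hyp2F1one ((nv j : ℝ)/2) (((nv j : ℝ)+1)/2) (1/(u+ω)^2))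
            * ∏ j, (1/(u+ω)^(nv j))) := by
          rw [← Finset.prod_mul_distrib, ← Finset.prod_mul_distrib]
      _ = κ ^ k * ((∏ j, Real.Gamma (nv j)
            * hyp2F1one ((nv j : ℝ)/2) (((nv j : ℝ)+1)/2) (1/(u+ω)^2)) * (1/(u+ω)^n)) := by
          rw [Finset.prod_const, Finset.card_univ, Fintype.card_fin]
          congr 1
          congr 1
          simp only [one_div]
          rw [Finset.prod_inv_distrib, Finset.prod_pow_eq_pow_sum, hn]
  rw [hprodall]
  ring
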